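/- Let f : ℝ → ℝ be C¹ on a neighborhood of 0, and define h(x) = x⁻² ∫₀ˣ s·f(s) ds for x ≠ 0 and h(0) = f(0)/2. Then h is continuous at 0 and differentiable at 0, with h'(0) = f'(0)/3. -/

import Mathlib

open Set Real Filter Topology intervalIntegral

/-- If `f` is `C¹` near `0` and `h(x) = x⁻² ∫₀ˣ s·f(s) ds` for `x ≠ 0`, `h(0) = f(0)/2`,
then `h` is continuous at `0` and differentiable at `0` with `h'(0) = f'(0)/3`. -/
theorem continuous_and_hasDerivAt_of_integral_div_sq
    (f : ℝ → ℝ) (hf : ContDiffAt ℝ 1 f 0)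
    (h : ℝ → ℝ)
    (hdef : ∀ x : ℝ, x ≠ 0 → h x = (x ^ 2)⁻¹ * ∫ s in (0:ℝ)..x, s * f s)
    (h0 : h 0 = f 0 / 2) :
    ContinuousAt h 0 ∧ HasDerivAt h (deriv f 0 / 3) 0 := by
  set d := deriv f 0 with hd
  have hfd : HasDerivAt f d 0 := (hf.differentiableAt one_ne_zero).hasDerivAt
  -- continuity of f on a neighborhood
  obtain ⟨u, hu, hfu⟩ := hf.contDiffOn le_rfl (by simp)
  obtain ⟨δ, hδpos, hball⟩ := Metric.mem_nhds_iff.1 hu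
  have hcont : ∀ x : ℝ, |x| < δ → ContinuousOn (fun s => s * f s) (uIcc 0 x) := by
    intro x hx
    have hsub : uIcc 0 x ⊆ Metric.ball 0 δ := by
      intro s hs
      rw [Set.mem_uIcc] at hs
      rw [Metric.mem_ball, Real.dist_eq, sub_zero]
      rcases hs with ⟨h1, h2⟩ | ⟨h1, h2⟩
      · exact lt_of_le_of_lt (abs_le.2 ⟨le_trans (neg_nonpos_of_nonneg (abs_nonneg x)) h1,
          le_trans h2 (le_abs_self x)⟩) hx
      · exact lt_of_le_of_lt (abs_le.2 ⟨le_trans (neg_abs_le x) h1, le_trans h2 (abs_nonneg x)⟩) hx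
    exact continuousOn_id.mul (((hfu.continuousOn).mono (hsub.trans hball)))
  have hmain : HasDerivAt h (d / 3) 0 := by
    rw [hasDerivAt_iff_tendsto_slope]
    rw [Metric.tendsto_nhds]
    intro ε hε
    -- little-o bound
    have hlo := (hasDerivAt_iff_isLittleO.1 hfd).def (show (0:ℝ) < ε/2 by linarith)
    rw [Metric.eventually_nhds_iff] at hlo
    obtain ⟨δ₂, hδ₂pos, hb⟩ := hlo
    have hev : ∀ᶠ x in 𝓝[≠] (0:ℝ), |x| < min δ δ₂ := by
      apply eventually_nhdsWithin_of_eventually_nhds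
      have : Metric.ball (0:ℝ) (min δ δ₂) ∈ 𝓝 (0:ℝ) :=
        Metric.ball_mem_nhds _ (lt_min hδpos hδ₂pos)
      filter_upwards [this] with x hx
      simpa [Real.dist_eq] using hx
    filter_upwards [hev, self_mem_nhdsWithin] with x hx hx0
    simp only [Set.mem_compl_iff, Set.mem_singleton_iff] at hx0
    have hxδ : |x| < δ := lt_of_lt_of_le hx (min_le_left _ _)
    have hxδ₂ : |x| < δ₂ := lt_of_lt_of_le hx (min_le_right _ _)
    -- integrabilities
    have hi1 : IntervalIntegrable (fun s => s * f s) MeasureTheory.volume 0 x :=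
      (hcont x hxδ).intervalIntegrable
    have hi2 : IntervalIntegrable (fun s => s * f 0) MeasureTheory.volume 0 x :=
      (continuous_id.mul continuous_const).intervalIntegrable _ _
    have hi3 : IntervalIntegrable (fun s => s * (s * d)) MeasureTheory.volume 0 x := by
      apply Continuous.intervalIntegrable; continuity
    have hi4 : IntervalIntegrable (fun s => s * (f s - f 0 - s * d)) MeasureTheory.volume 0 x := by
      have : (fun s => s * (f s - f 0 - s * d)) =
          fun s => s * f s - s * f 0 - s * (s * d) := by
        funext s; ring
      rw [this]
      exact (hi1.sub hi2).sub hi3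
    -- integral computations
    have e2 : (∫ s in (0:ℝ)..x, s * f 0) = x ^ 2 / 2 * f 0 := by
      rw [intervalIntegral.integral_mul_const, integral_id]
      ring
    have e3 : (∫ s in (0:ℝ)..x, s * (s * d)) = x ^ 3 / 3 * d := by
      have : (fun s : ℝ => s * (s * d)) = fun s => s ^ 2 * d := by funext s; ring
      rw [this, intervalIntegral.integral_mul_const, integral_pow]
      norm_num
    have esplit : (∫ s in (0:ℝ)..x, s * (f s - f 0 - s * d))
        = (∫ s in (0:ℝ)..x, s * f s) - x ^ 2 / 2 * f 0 - x ^ 3 / 3 * d := by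
      have : (fun s => s * (f s - f 0 - s * d)) =
          fun s => (fun s => s * f s) s - (fun s => s * f 0) s - (fun s => s * (s * d)) s := by
        funext s; ring
      rw [this, intervalIntegral.integral_sub (hi1.sub hi2) hi3,
        intervalIntegral.integral_sub hi1 hi2, e2, e3]
    -- bound on remainder
    set R := ∫ s in (0:ℝ)..x, s * (f s - f 0 - s * d) with hR
    have hRbound : ‖R‖ ≤ ε / 2 * |x| ^ 2 * |x| := by
      have := intervalIntegral.norm_integral_le_of_norm_le_const
        (f := fun s => s * (f s - f 0 - s * d)) (a := 0) (b := x) (C := ε / 2 * |x| ^ 2) ?_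
      · simpa [sub_zero] using this
      · intro s hs
        have hs' : |s| ≤ |x| := by
          rw [Set.mem_uIoc] at hs
          rcases hs with ⟨h1, h2⟩ | ⟨h1, h2⟩
          · rw [abs_of_pos h1]; exact le_trans h2 (le_abs_self x)
          · rw [abs_of_nonpos h2]
            exact le_trans (neg_le_neg (le_of_lt h1)) (neg_le_abs x)
        have hsd : dist s 0 < δ₂ := by
          rw [Real.dist_eq, sub_zero]; exact lt_of_le_of_lt hs' hxδ₂
        have hbs := hb hsd
        simp only [sub_zero, smul_eq_mul] at hbs
        rw [Real.norm_eq_abs, abs_mul]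
        calc |s| * |f s - f 0 - s * d| ≤ |s| * (ε / 2 * |s|) := by
              apply mul_le_mul_of_nonneg_left _ (abs_nonneg s)
              simpa [Real.norm_eq_abs] using hbs
          _ ≤ |x| * (ε / 2 * |x|) := by
              apply mul_le_mul hs' _ (by positivity) (abs_nonneg x)
              exact mul_le_mul_of_nonneg_left hs' (by linarith)
          _ = ε / 2 * |x| ^ 2 := by ring
    -- identity for the slope
    have hslope : slope h 0 x - d / 3 = (x ^ 3)⁻¹ * R := by
      rw [slope_def_field, hdef x hx0, h0, esplit]
      field_simp
      ring
    have hx0' : (0:ℝ) < |x| := abs_pos.2 hx0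
    rw [Real.dist_eq]
    have hle : |slope h 0 x - d / 3| ≤ ε / 2 := by
      rw [hslope, abs_mul, abs_inv, abs_pow]
      rw [Real.norm_eq_abs] at hRbound
      calc (|x| ^ 3)⁻¹ * |R| ≤ (|x| ^ 3)⁻¹ * (ε / 2 * |x| ^ 2 * |x|) := by
            apply mul_le_mul_of_nonneg_left hRbound (by positivity)
        _ = ε / 2 := by
            field_simp
    linarith
  exact ⟨hmain.continuousAt, hmain⟩
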